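/- Let D ≥ 1 be an integer and let p be a single-edge strategy in vector form. Then σ_p is absolutely continuous with respect to Λ, and the function f_p(y) := Σ_{k=1}^D ∫_{[0,1]^{D−1}} p_k(u_1,…,u_{k−1}, y, u_{k+1},…,u_D) dΛ^{D−1}(u_1,…,û_k,…,u_D) is a density of σ_p with respect to Λ; moreover 0 ≤ f_p(y) ≤ D for all y ∈ [0,1]. -/
import Mathlib


open MeasureTheory Filter unitInterval
open scoped ENNReal Topology Classical

noncomputable def LamD (D : ℕ) : Measure (Fin D → unitInterval) :=
  Measure.pi fun _ => (volume : Measure unitInterval)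

def IsStrategyVec {D : ℕ} (p : (Fin D → unitInterval) → Fin D → ℝ) : Prop :=
  Measurable p ∧ (∀ u k, 0 ≤ p u k) ∧ (∀ u k, p u k ≤ 1) ∧ (∀ u, ∑ k, p u k = 1)

noncomputable def sigmaVec {D : ℕ} (p : (Fin D → unitInterval) → Fin D → ℝ) :
    Measure unitInterval :=
  ∑ k : Fin D, Measure.map (fun u => u k)
    ((LamD D).withDensity fun u => ENNReal.ofReal (p u k))

noncomputable def densityFn {D : ℕ} (p : (Fin D → unitInterval) → Fin D → ℝ)
    (y : unitInterval) : ℝ :=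
  ∑ k : Fin D, ∫ u, p (Function.update u k y) k ∂(LamD D)

def IsConsistent {D : ℕ} [NeZero D] (q : (Fin D → unitInterval) → Fin D → ℝ) : Prop :=
  (∀ u k, q u k = q (fun i => u (k + i)) 0) ∧
  (∀ u (ι : Equiv.Perm (Fin D)), ι 0 = 0 → q u 0 = q (fun i => u (ι i)) 0)

def strategyLaws (D : ℕ) : Set (Measure unitInterval) :=
  {m | ∃ p : (Fin D → unitInterval) → Fin D → ℝ, IsStrategyVec p ∧ m = sigmaVec p}

def IsExtremeLaw (D : ℕ) (m : Measure unitInterval) : Prop :=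
  m ∈ strategyLaws D ∧ ∀ m₁ ∈ strategyLaws D, ∀ m₂ ∈ strategyLaws D, ∀ t : ℝ,
    0 < t → t < 1 → m = ENNReal.ofReal t • m₁ + ENNReal.ofReal (1 - t) • m₂ → m₁ = m₂

def IsMPB (φ : unitInterval → unitInterval) : Prop :=
  Function.Bijective φ ∧ Measurable φ ∧ Measurable (Function.invFun φ) ∧
  ∀ B : Set unitInterval, MeasurableSet B → volume (φ '' B) = volume B

noncomputable def maxCoord (D : ℕ) (hD : 1 ≤ D) (u : Fin D → unitInterval) : unitInterval :=
  Finset.univ.sup' ⟨⟨0, hD⟩, Finset.mem_univ _⟩ u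

noncomputable def sigmaMax (D : ℕ) (hD : 1 ≤ D) : Measure unitInterval :=
  Measure.map (maxCoord D hD) (LamD D)

noncomputable def emp {D : ℕ} {Ω : Type*} (V : ℕ × Fin D → Ω → unitInterval)
    (ω : Ω) (n : ℕ) (π : Fin n → Fin D) : Measure unitInterval :=
  (n : ℝ≥0∞)⁻¹ • ∑ i : Fin n, Measure.dirac (V ((i : ℕ), π i) ω)


section Aux

open Function

variable {D : ℕ}

private lemma updateFinset_update_comm {δ : Type*} [DecidableEq δ] {π : δ → Type*}
    {s : Finset δ} {k : δ} (hk : k ∉ s) (x : ∀ i, π i) (y : π k) (v : ∀ i : s, π i) :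
    Function.updateFinset (Function.update x k y) s v
      = Function.update (Function.updateFinset x s v) k y := by
  funext i
  rcases eq_or_ne i k with rfl | h
  · have : i ∉ s := hk
    simp [Function.updateFinset, this]
  · by_cases hi : i ∈ s <;>
      simp [Function.updateFinset, hi, Function.update_of_ne h]

private lemma lmarginal_update_comm {δ : Type*} [DecidableEq δ] {π : δ → Type*}
    [∀ i, MeasurableSpace (π i)] (μ : ∀ i, Measure (π i)) {s : Finset δ} {k : δ}
    (hk : k ∉ s) (F : (∀ i, π i) → ℝ≥0∞) (y : π k) (w : ∀ i, π i) :
    (∫⋯∫⁻_s, (fun u => F (Function.update u k y)) ∂μ) w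
      = (∫⋯∫⁻_s, F ∂μ) (Function.update w k y) := by
  simp only [MeasureTheory.lmarginal]
  refine lintegral_congr fun v => ?_
  rw [updateFinset_update_comm hk]

private lemma fubini_coord (k : Fin D) {F : (Fin D → unitInterval) → ℝ≥0∞}
    (hF : Measurable F) :
    ∫⁻ u, F u ∂(LamD D)
      = ∫⁻ y, (∫⁻ u, F (Function.update u k y) ∂(LamD D))
          ∂(volume : Measure unitInterval) := by
  classical
  unfold LamD
  set μ : Fin D → Measure unitInterval := fun _ => volume with hμ
  set x₀ : Fin D → unitInterval := fun _ => 0 with hx₀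
  rw [lintegral_eq_lmarginal_univ (μ := μ) x₀,
    ← Finset.insert_erase (Finset.mem_univ k),
    MeasureTheory.lmarginal_insert _ hF (Finset.notMem_erase k Finset.univ)]
  refine lintegral_congr fun y => ?_
  have hG : Measurable fun u => F (Function.update u k y) :=
    hF.comp measurable_update_left
  rw [lintegral_eq_lmarginal_univ (μ := μ) x₀,
    ← Finset.insert_erase (Finset.mem_univ k),
    MeasureTheory.lmarginal_insert _ hG (Finset.notMem_erase k Finset.univ)]
  simp_rw [lmarginal_update_comm μ (Finset.notMem_erase k Finset.univ) F y,
    Function.update_idem]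
  rw [lintegral_const]
  simp [hμ]

private lemma map_withDensity_eq (k : Fin D) {g : (Fin D → unitInterval) → ℝ≥0∞}
    (hg : Measurable g) :
    Measure.map (fun u => u k) ((LamD D).withDensity g)
      = (volume : Measure unitInterval).withDensity
          (fun y => ∫⁻ u, g (Function.update u k y) ∂(LamD D)) := by
  ext A hA
  rw [Measure.map_apply (measurable_pi_apply k) hA,
    withDensity_apply _ ((measurable_pi_apply k) hA), withDensity_apply _ hA]
  have h1 : ∫⁻ u in (fun u : Fin D → unitInterval => u k) ⁻¹' A, g u ∂(LamD D)
      = ∫⁻ u, g u * A.indicator 1 (u k) ∂(LamD D) := by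
    rw [← lintegral_indicator ((measurable_pi_apply k) hA)]
    refine lintegral_congr fun u => ?_
    by_cases h : u k ∈ A <;> simp [Set.indicator, h]
  have hmeas : Measurable fun u : Fin D → unitInterval => g u * A.indicator 1 (u k) :=
    hg.mul ((measurable_const.indicator hA).comp (measurable_pi_apply k))
  rw [h1, fubini_coord k hmeas, ← lintegral_indicator hA]
  refine lintegral_congr fun y => ?_
  simp only [Function.update_self]
  rw [lintegral_mul_const' (A.indicator 1 y) _ (by by_cases h : y ∈ A <;> simp [h])]
  by_cases h : y ∈ A <;> simp [Set.indicator, h]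

end Aux

/-- `σ_p ≪ Λ` with density `f_p`, and `0 ≤ f_p ≤ D`. -/
theorem stmt2 (D : ℕ) (hD : 1 ≤ D)
    (p : (Fin D → unitInterval) → Fin D → ℝ) (hp : IsStrategyVec p) :
    sigmaVec p ≪ (volume : Measure unitInterval) ∧
    sigmaVec p = (volume : Measure unitInterval).withDensity
      (fun y => ENNReal.ofReal (densityFn p y)) ∧
    ∀ y : unitInterval, 0 ≤ densityFn p y ∧ densityFn p y ≤ D := by
  classical
  obtain ⟨hmeas, hnn, hle, hsum⟩ := hp
  haveI : IsProbabilityMeasure (LamD D) := by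
    unfold LamD; infer_instance
  have hpk : ∀ k : Fin D, Measurable fun u => p u k := fun k =>
    (measurable_pi_apply k).comp hmeas
  set f : Fin D → unitInterval → ℝ≥0∞ := fun k y =>
    ∫⁻ u, ENNReal.ofReal (p (Function.update u k y) k) ∂(LamD D) with hf
  have hfm : ∀ k, Measurable (f k) := by
    intro k
    have h : Measurable fun z : unitInterval × (Fin D → unitInterval) =>
        ENNReal.ofReal (p (Function.update z.2 k z.1) k) :=
      ENNReal.measurable_ofReal.comp
        ((hpk k).comp (measurable_update'.comp (measurable_snd.prodMk measurable_fst)))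
    exact Measurable.lintegral_prod_right
      (f := fun (y : unitInterval) (u : Fin D → unitInterval) =>
        ENNReal.ofReal (p (Function.update u k y) k)) h
  have hsig : sigmaVec p = ∑ k, (volume : Measure unitInterval).withDensity (f k) := by
    unfold sigmaVec
    refine Finset.sum_congr rfl fun k _ => ?_
    exact map_withDensity_eq k (ENNReal.measurable_ofReal.comp (hpk k))
  have hint : ∀ (k : Fin D) (y : unitInterval),
      Integrable (fun u => p (Function.update u k y) k) (LamD D) := by
    intro k y
    refine Integrable.mono' (integrable_const 1)
      ((hpk k).comp measurable_update_left).aestronglyMeasurable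
      (ae_of_all _ fun u => ?_)
    rw [Real.norm_eq_abs, abs_of_nonneg (hnn _ _)]
    exact hle _ _
  have hfk_eq : ∀ k y, f k y
      = ENNReal.ofReal (∫ u, p (Function.update u k y) k ∂(LamD D)) := fun k y =>
    (ofReal_integral_eq_lintegral_ofReal (hint k y) (ae_of_all _ fun u => hnn _ _)).symm
  have hdens : ∀ y, ENNReal.ofReal (densityFn p y) = ∑ k, f k y := by
    intro y
    rw [densityFn, ENNReal.ofReal_sum_of_nonneg
      (fun k _ => integral_nonneg fun u => hnn _ _)]
    exact Finset.sum_congr rfl fun k _ => (hfk_eq k y).symm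
  have hsum_wd : (volume : Measure unitInterval).withDensity
      (fun y => ENNReal.ofReal (densityFn p y))
        = ∑ k, (volume : Measure unitInterval).withDensity (f k) := by
    ext A hA
    rw [withDensity_apply _ hA, Measure.finset_sum_apply]
    simp_rw [withDensity_apply _ hA]
    rw [← lintegral_finset_sum' _ (fun k _ => (hfm k).aemeasurable)]
    exact lintegral_congr fun y => hdens y
  have heq : sigmaVec p = (volume : Measure unitInterval).withDensity
      (fun y => ENNReal.ofReal (densityFn p y)) := hsig.trans hsum_wd.symm
  refine ⟨?_, heq, fun y => ⟨?_, ?_⟩⟩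
  · rw [heq]; exact withDensity_absolutelyContinuous _ _
  · exact Finset.sum_nonneg fun k _ => integral_nonneg fun u => hnn _ _
  · have hone : ∀ k : Fin D, ∫ u, p (Function.update u k y) k ∂(LamD D) ≤ 1 := by
      intro k
      calc ∫ u, p (Function.update u k y) k ∂(LamD D)
          ≤ ∫ _u, (1 : ℝ) ∂(LamD D) :=
            integral_mono (hint k y) (integrable_const 1) fun u => hle _ _
        _ = 1 := by simp
    calc densityFn p y ≤ ∑ _k : Fin D, (1 : ℝ) :=
          Finset.sum_le_sum fun k _ => hone k
      _ = D := by simp
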